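/- For every matrix w ∈ 𝕎 and every pair (ν₁, ν₂) ∈ G with blocks A ∈ GL₂(ℂ), α ∈ ℂ* (in ν₁) and β ∈ ℂ*, B ∈ GL₂(ℂ) (in ν₂) as in the context, one has the identity Δ(ν₂ · w · ν₁⁻¹) = (β/α) · B · Δ(w) · A⁻¹ of 2×2 matrices of quadratic forms. In particular Δ intertwines the G-action on 𝕎 with the action of GL₂(ℂ) × GL₂(ℂ) on 2×2 matrices of quadratic forms given by (A, B)·M = B·M·A⁻¹. -/

import Mathlib

open MvPolynomial Matrix

noncomputable section

/-- The polynomial ring `R = ℂ[x₀,x₁,x₂]`. -/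
abbrev Rp : Type := MvPolynomial (Fin 3) ℂ

/-- `p` is a linear form. -/
def IsLin (p : Rp) : Prop := p.IsHomogeneous 1

/-- `p` is a quadratic form. -/
def IsQuad (p : Rp) : Prop := p.IsHomogeneous 2

/-- Membership in `𝕎` : entries `w₁₁, w₁₂, w₂₃, w₃₃` linear, `w₁₃` a constant,
`w₂₁, w₂₂, w₃₁, w₃₂` quadratic. -/
def Wmat (w : Matrix (Fin 3) (Fin 3) Rp) : Prop :=
  IsLin (w 0 0) ∧ IsLin (w 0 1) ∧ IsLin (w 1 2) ∧ IsLin (w 2 2) ∧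
  (∃ c : ℂ, w 0 2 = C c) ∧
  IsQuad (w 1 0) ∧ IsQuad (w 1 1) ∧ IsQuad (w 2 0) ∧ IsQuad (w 2 1)

/-- `Δ(w) = w₁₃·[[w₂₁, w₂₂],[w₃₁, w₃₂]] − [[w₂₃],[w₃₃]]·[w₁₁, w₁₂]`. -/
def Δ (w : Matrix (Fin 3) (Fin 3) Rp) : Matrix (Fin 2) (Fin 2) Rp :=
  !![w 0 2 * w 1 0 - w 1 2 * w 0 0, w 0 2 * w 1 1 - w 1 2 * w 0 1;
     w 0 2 * w 2 0 - w 2 2 * w 0 0, w 0 2 * w 2 1 - w 2 2 * w 0 1]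

/-- The matrix `ν₁ = [[A, 0],[φ, α]]`. -/
def nu1 (A : Matrix (Fin 2) (Fin 2) ℂ) (α : ℂ) (φ : Fin 2 → Rp) :
    Matrix (Fin 3) (Fin 3) Rp :=
  !![C (A 0 0), C (A 0 1), 0;
     C (A 1 0), C (A 1 1), 0;
     φ 0, φ 1, C α]

/-- The matrix `ν₂ = [[β, 0],[ψ, B]]`. -/
def nu2 (B : Matrix (Fin 2) (Fin 2) ℂ) (β : ℂ) (ψ : Fin 2 → Rp) :
    Matrix (Fin 3) (Fin 3) Rp :=
  !![C β, 0, 0;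
     ψ 0, C (B 0 0), C (B 0 1);
     ψ 1, C (B 1 0), C (B 1 1)]

lemma Δ_lit (a b c d e f g h i : Rp) :
    Δ !![a, b, c; d, e, f; g, h, i] =
      !![c * d - f * a, c * e - f * b; c * g - i * a, c * h - i * b] := rfl

set_option maxHeartbeats 1600000 in
theorem stmt0 (w : Matrix (Fin 3) (Fin 3) Rp) (hw : Wmat w)
    (A B : Matrix.GeneralLinearGroup (Fin 2) ℂ) (α β : ℂˣ)
    (φ ψ : Fin 2 → Rp) (hφ : ∀ i, IsLin (φ i)) (hψ : ∀ i, IsLin (ψ i)) :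
    Δ (nu2 (B : Matrix (Fin 2) (Fin 2) ℂ) (β : ℂ) ψ * w *
        (nu1 (A : Matrix (Fin 2) (Fin 2) ℂ) (α : ℂ) φ)⁻¹) =
      (C ((β : ℂ) / (α : ℂ)) : Rp) •
        (((B : Matrix (Fin 2) (Fin 2) ℂ)).map (fun x => C x) * Δ w *
          ((A⁻¹ : Matrix.GeneralLinearGroup (Fin 2) ℂ) :
            Matrix (Fin 2) (Fin 2) ℂ).map (fun x => C x)) := by
  set A' : Matrix (Fin 2) (Fin 2) ℂ :=
    ((A⁻¹ : Matrix.GeneralLinearGroup (Fin 2) ℂ) : Matrix (Fin 2) (Fin 2) ℂ) with hA'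
  have hAA' : (A : Matrix (Fin 2) (Fin 2) ℂ) * A' = 1 := by
    rw [hA']; exact_mod_cast A.mul_inv
  have h00 : (A : Matrix (Fin 2) (Fin 2) ℂ) 0 0 * A' 0 0 +
      (A : Matrix (Fin 2) (Fin 2) ℂ) 0 1 * A' 1 0 = 1 := by
    have := Matrix.ext_iff.mpr hAA' 0 0
    simpa [Matrix.mul_apply, Fin.sum_univ_succ, Matrix.one_apply] using this
  have h01 : (A : Matrix (Fin 2) (Fin 2) ℂ) 0 0 * A' 0 1 +
      (A : Matrix (Fin 2) (Fin 2) ℂ) 0 1 * A' 1 1 = 0 := by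
    have := Matrix.ext_iff.mpr hAA' 0 1
    simpa [Matrix.mul_apply, Fin.sum_univ_succ, Matrix.one_apply] using this
  have h10 : (A : Matrix (Fin 2) (Fin 2) ℂ) 1 0 * A' 0 0 +
      (A : Matrix (Fin 2) (Fin 2) ℂ) 1 1 * A' 1 0 = 0 := by
    have := Matrix.ext_iff.mpr hAA' 1 0
    simpa [Matrix.mul_apply, Fin.sum_univ_succ, Matrix.one_apply] using this
  have h11 : (A : Matrix (Fin 2) (Fin 2) ℂ) 1 0 * A' 0 1 +
      (A : Matrix (Fin 2) (Fin 2) ℂ) 1 1 * A' 1 1 = 1 := by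
    have := Matrix.ext_iff.mpr hAA' 1 1
    simpa [Matrix.mul_apply, Fin.sum_univ_succ, Matrix.one_apply] using this
  have hα : (C ((α : ℂ)) * C ((α : ℂ)⁻¹) : Rp) = 1 := by
    rw [← C_mul, mul_inv_cancel₀ (Units.ne_zero α), C_1]
  set N : Matrix (Fin 3) (Fin 3) Rp :=
    !![C (A' 0 0), C (A' 0 1), 0;
       C (A' 1 0), C (A' 1 1), 0;
       -C ((α : ℂ)⁻¹) * (φ 0 * C (A' 0 0) + φ 1 * C (A' 1 0)),
       -C ((α : ℂ)⁻¹) * (φ 0 * C (A' 0 1) + φ 1 * C (A' 1 1)),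
       C ((α : ℂ)⁻¹)] with hN
  have c00 : C ((A : Matrix (Fin 2) (Fin 2) ℂ) 0 0) * C (A' 0 0) +
      C ((A : Matrix (Fin 2) (Fin 2) ℂ) 0 1) * C (A' 1 0) = (1 : Rp) := by
    rw [← C_mul, ← C_mul, ← C_add, h00, C_1]
  have c01 : C ((A : Matrix (Fin 2) (Fin 2) ℂ) 0 0) * C (A' 0 1) +
      C ((A : Matrix (Fin 2) (Fin 2) ℂ) 0 1) * C (A' 1 1) = (0 : Rp) := by
    rw [← C_mul, ← C_mul, ← C_add, h01, C_0]
  have c10 : C ((A : Matrix (Fin 2) (Fin 2) ℂ) 1 0) * C (A' 0 0) +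
      C ((A : Matrix (Fin 2) (Fin 2) ℂ) 1 1) * C (A' 1 0) = (0 : Rp) := by
    rw [← C_mul, ← C_mul, ← C_add, h10, C_0]
  have c11 : C ((A : Matrix (Fin 2) (Fin 2) ℂ) 1 0) * C (A' 0 1) +
      C ((A : Matrix (Fin 2) (Fin 2) ℂ) 1 1) * C (A' 1 1) = (1 : Rp) := by
    rw [← C_mul, ← C_mul, ← C_add, h11, C_1]
  have hinv : (nu1 (A : Matrix (Fin 2) (Fin 2) ℂ) (α : ℂ) φ)⁻¹ = N := by
    apply Matrix.inv_eq_right_inv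
    rw [← Matrix.ext_iff]
    intro i j
    fin_cases i <;> fin_cases j <;>
      simp [nu1, hN, Matrix.mul_apply, Fin.sum_univ_succ, Matrix.one_apply]
    all_goals
      first
      | with_reducible exact c00 | with_reducible exact c01 | with_reducible exact c10
      | with_reducible exact c11 | with_reducible exact hα
      | linear_combination (-(φ 0 * C (A' 0 0) + φ 1 * C (A' 1 0))) * hα
      | linear_combination (-(φ 0 * C (A' 0 1) + φ 1 * C (A' 1 1))) * hα
  rw [hinv]
  have hdiv : (C ((β : ℂ) / (α : ℂ)) : Rp) = C ((β : ℂ)) * C ((α : ℂ)⁻¹) := by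
    rw [div_eq_mul_inv, C_mul]
  have hw3 : w = !![w 0 0, w 0 1, w 0 2; w 1 0, w 1 1, w 1 2; w 2 0, w 2 1, w 2 2] := by
    ext i j; fin_cases i <;> fin_cases j <;> rfl
  have hB : ((B : Matrix (Fin 2) (Fin 2) ℂ)).map (fun x => C x) =
      (!![C ((B : Matrix (Fin 2) (Fin 2) ℂ) 0 0), C ((B : Matrix (Fin 2) (Fin 2) ℂ) 0 1);
         C ((B : Matrix (Fin 2) (Fin 2) ℂ) 1 0), C ((B : Matrix (Fin 2) (Fin 2) ℂ) 1 1)] :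
        Matrix (Fin 2) (Fin 2) Rp) := by
    ext i j; fin_cases i <;> fin_cases j <;> rfl
  have hA2 : A'.map (fun x => C x) =
      (!![C (A' 0 0), C (A' 0 1); C (A' 1 0), C (A' 1 1)] : Matrix (Fin 2) (Fin 2) Rp) := by
    ext i j; fin_cases i <;> fin_cases j <;> rfl
  have hnu2 : nu2 ((B : Matrix (Fin 2) (Fin 2) ℂ)) ((β : ℂ)) ψ =
      !![C ((β : ℂ)), 0, 0;
         ψ 0, C ((B : Matrix (Fin 2) (Fin 2) ℂ) 0 0), C ((B : Matrix (Fin 2) (Fin 2) ℂ) 0 1);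
         ψ 1, C ((B : Matrix (Fin 2) (Fin 2) ℂ) 1 0), C ((B : Matrix (Fin 2) (Fin 2) ℂ) 1 1)] :=
    rfl
  rw [hnu2, hw3, hB, hA2, hN, Matrix.mul_fin_three, Matrix.mul_fin_three, Δ_lit, Δ_lit,
    Matrix.mul_fin_two, Matrix.mul_fin_two, hdiv]
  rw [← Matrix.ext_iff]
  intro i j
  fin_cases i <;> fin_cases j <;> simp <;> ring
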